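/- (Appendix, equation (12b).) For all subcarriers p, q ∈ {0,…,N−1} with p ≠ q, E[ conj(h̄(p)) · H̄^{ICI}_{pq} ] = (1 − ρ̄(q−p)) / ( N·(1 − e^{2πi(q−p)/N}) ), where ρ̄(η) = Σ_{ℓ=0}^{L−1} ρ(ℓ)·e^{−2πiℓη/N} for integers η. -/

import Mathlib

open Finset MeasureTheory

/-- Frequency-domain channel coefficient `h̄(p) = ∑_{ℓ=0}^{L-1} h(ℓ)·e^{-2πiℓp/N}`. -/
noncomputable def hBar {Ω : Type*} (N L : ℕ) (h : ℕ → Ω → ℂ) (p : ℕ) (ω : Ω) : ℂ :=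
  ∑ ℓ ∈ range L, h ℓ ω *
    Complex.exp (-(2 * (Real.pi : ℂ) * Complex.I * (ℓ : ℂ) * (p : ℂ)) / (N : ℂ))

/-- Frequency-domain ICI matrix entry
`H̄^{ICI}_{pq} = (1/N)·∑_{n=0}^{N-1} ∑_{ℓ=0}^{L-1} h(ℓ)·e^{2πi(nq-ℓq-np)/N}·𝟙[ℓ ≤ n]`. -/
noncomputable def Hici {Ω : Type*} (N L : ℕ) (h : ℕ → Ω → ℂ) (p q : ℕ) (ω : Ω) : ℂ :=
  (1 / (N : ℂ)) * ∑ n ∈ range N, ∑ ℓ ∈ range L,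
    h ℓ ω * Complex.exp (2 * (Real.pi : ℂ) * Complex.I *
      ((((n * q : ℕ) : ℤ) - ((ℓ * q : ℕ) : ℤ) - ((n * p : ℕ) : ℤ) : ℤ) : ℂ) / (N : ℂ)) *
    (if ℓ ≤ n then 1 else 0)

/-- DFT of the power delay profile: `ρ̄(η) = ∑_{ℓ=0}^{L-1} ρ(ℓ)·e^{-2πiℓη/N}`. -/
noncomputable def rhoBar (N L : ℕ) (ρ : ℕ → ℝ) (η : ℤ) : ℂ :=
  ∑ ℓ ∈ range L, (ρ ℓ : ℂ) *
    Complex.exp (-(2 * (Real.pi : ℂ) * Complex.I * (ℓ : ℂ) * (η : ℂ)) / (N : ℂ))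

/-- Appendix, equation (12b): for `p ≠ q`,
`E[conj(h̄(p)) · H̄^{ICI}_{pq}] = (1 - ρ̄(q-p)) / (N·(1 - e^{2πi(q-p)/N}))`. -/
theorem stmt2 {Ω : Type*} [MeasurableSpace Ω] (μ : Measure Ω) [IsProbabilityMeasure μ]
    (N L : ℕ) (hL1 : 1 ≤ L) (hLN : L ≤ N)
    (ρ : ℕ → ℝ) (hnn : ∀ ℓ, 0 ≤ ρ ℓ) (hsum : ∑ ℓ ∈ range L, ρ ℓ = 1)
    (h : ℕ → Ω → ℂ)
    (hint : ∀ ℓ ℓ', ℓ < L → ℓ' < L →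
      Integrable (fun ω => h ℓ ω * (starRingEnd ℂ) (h ℓ' ω)) μ)
    (hmean : ∀ ℓ, ℓ < L → ∫ ω, h ℓ ω ∂μ = 0)
    (hcov : ∀ ℓ ℓ', ℓ < L → ℓ' < L →
      ∫ ω, h ℓ ω * (starRingEnd ℂ) (h ℓ' ω) ∂μ = if ℓ = ℓ' then ((ρ ℓ : ℝ) : ℂ) else 0)
    (p q : ℕ) (hp : p < N) (hq : q < N) (hpq : p ≠ q) :
    ∫ ω, (starRingEnd ℂ) (hBar N L h p ω) * Hici N L h p q ω ∂μ
      = (1 - rhoBar N L ρ ((q : ℤ) - (p : ℤ))) /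
        ((N : ℂ) * (1 - Complex.exp (2 * (Real.pi : ℂ) * Complex.I *
          (((q : ℤ) - (p : ℤ) : ℤ) : ℂ) / (N : ℂ)))) := by
  have hN : 0 < N := lt_of_lt_of_le hL1 hLN
  have hNc : (N:ℂ) ≠ 0 := Nat.cast_ne_zero.mpr hN.ne'
  set d : ℤ := (q:ℤ) - (p:ℤ) with hd
  set w : ℂ := Complex.exp (2 * (Real.pi:ℂ) * Complex.I * (d:ℂ) / (N:ℂ)) with hwdef
  have hw0 : w ≠ 0 := Complex.exp_ne_zero _
  have hw1 : w ≠ 1 := by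
    rw [hwdef]
    intro hcon
    rw [Complex.exp_eq_one_iff] at hcon
    obtain ⟨k, hk⟩ := hcon
    have h2 : (2 * (Real.pi:ℂ) * Complex.I) ≠ 0 := by
      simp [Real.pi_ne_zero, Complex.I_ne_zero]
    have h3 : (d:ℂ) * (2 * (Real.pi:ℂ) * Complex.I)
        = ((k * N : ℤ):ℂ) * (2 * (Real.pi:ℂ) * Complex.I) := by
      push_cast
      field_simp at hk
      linear_combination (2 * (Real.pi:ℂ) * Complex.I) * hk
    have h5 : d = k * N := by
      exact_mod_cast mul_right_cancel₀ h2 h3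
    have h8 : d.natAbs = k.natAbs * N := by
      rw [h5, Int.natAbs_mul]; simp
    have h9 : k.natAbs ≠ 0 := by
      rintro hk0
      rw [Int.natAbs_eq_zero] at hk0
      subst hk0
      simp at h5
      omega
    have h10 : N ≤ k.natAbs * N := Nat.le_mul_of_pos_left N (Nat.pos_of_ne_zero h9)
    omega
  have hwN : w ^ N = 1 := by
    rw [hwdef, ← Complex.exp_nat_mul,
      show (N:ℂ) * (2 * (Real.pi:ℂ) * Complex.I * (d:ℂ) / (N:ℂ))
        = (d:ℂ) * (2 * (Real.pi:ℂ) * Complex.I) by field_simp]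
    exact Complex.exp_int_mul_two_pi_mul_I d
  -- the deterministic coefficient
  set K : ℕ → ℕ → ℕ → ℂ := fun ℓ' n ℓ =>
    Complex.exp (2 * (Real.pi:ℂ) * Complex.I * (ℓ':ℂ) * (p:ℂ) / (N:ℂ)) *
      ((1 / (N:ℂ)) *
        (Complex.exp (2 * (Real.pi:ℂ) * Complex.I *
          ((((n * q : ℕ) : ℤ) - ((ℓ * q : ℕ) : ℤ) - ((n * p : ℕ) : ℤ) : ℤ) : ℂ) / (N:ℂ)) *
        (if ℓ ≤ n then 1 else 0))) with hK
  have expand : ∀ ω, (starRingEnd ℂ) (hBar N L h p ω) * Hici N L h p q ω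
      = ∑ n ∈ range N, ∑ ℓ ∈ range L, ∑ ℓ' ∈ range L,
          (h ℓ ω * (starRingEnd ℂ) (h ℓ' ω)) * K ℓ' n ℓ := by
    intro ω
    simp only [hBar, Hici, map_sum, map_mul, Finset.sum_mul, Finset.mul_sum, hK]
    refine Finset.sum_congr rfl fun n _ => ?_
    refine Finset.sum_congr rfl fun ℓ _ => ?_
    refine Finset.sum_congr rfl fun ℓ' _ => ?_
    have hc : (starRingEnd ℂ)
        (Complex.exp (-(2 * (Real.pi:ℂ) * Complex.I * (ℓ':ℂ) * (p:ℂ)) / (N:ℂ)))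
        = Complex.exp (2 * (Real.pi:ℂ) * Complex.I * (ℓ':ℂ) * (p:ℂ) / (N:ℂ)) := by
      rw [← Complex.exp_conj]
      congr 1
      simp only [map_div₀, map_neg, map_mul, map_natCast, map_ofNat,
        Complex.conj_I, Complex.conj_ofReal]
      ring
    rw [hc]
    ring
  have step1 : ∫ ω, (starRingEnd ℂ) (hBar N L h p ω) * Hici N L h p q ω ∂μ
      = ∑ n ∈ range N, ∑ ℓ ∈ range L, ∑ ℓ' ∈ range L,
          (if ℓ = ℓ' then ((ρ ℓ : ℝ) : ℂ) else 0) * K ℓ' n ℓ := by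
    simp_rw [expand]
    rw [integral_finset_sum _ (fun n hn => integrable_finset_sum _ (fun ℓ hℓ =>
      integrable_finset_sum _ (fun ℓ' hℓ' =>
        (hint ℓ ℓ' (mem_range.mp hℓ) (mem_range.mp hℓ')).mul_const _)))]
    refine Finset.sum_congr rfl fun n hn => ?_
    rw [integral_finset_sum _ (fun ℓ hℓ => integrable_finset_sum _ (fun ℓ' hℓ' =>
      (hint ℓ ℓ' (mem_range.mp hℓ) (mem_range.mp hℓ')).mul_const _))]
    refine Finset.sum_congr rfl fun ℓ hℓ => ?_
    rw [integral_finset_sum _ (fun ℓ' hℓ' =>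
      (hint ℓ ℓ' (mem_range.mp hℓ) (mem_range.mp hℓ')).mul_const _)]
    refine Finset.sum_congr rfl fun ℓ' hℓ' => ?_
    rw [integral_mul_const, hcov ℓ ℓ' (mem_range.mp hℓ) (mem_range.mp hℓ')]
  have step2 : (∑ n ∈ range N, ∑ ℓ ∈ range L, ∑ ℓ' ∈ range L,
          (if ℓ = ℓ' then ((ρ ℓ : ℝ) : ℂ) else 0) * K ℓ' n ℓ)
      = ∑ ℓ ∈ range L, ∑ n ∈ range N, ((ρ ℓ : ℝ) : ℂ) * K ℓ n ℓ := by
    rw [Finset.sum_comm]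
    refine Finset.sum_congr rfl fun ℓ hℓ => Finset.sum_congr rfl fun n hn => ?_
    simp_rw [ite_mul, zero_mul]
    rw [Finset.sum_ite_eq (range L) ℓ (fun ℓ' => ((ρ ℓ : ℝ) : ℂ) * K ℓ' n ℓ), if_pos hℓ]
  rw [step1, step2]
  -- now pure algebra
  have hterm : ∀ ℓ ∈ range L, ∀ n ∈ range N,
      ((ρ ℓ : ℝ) : ℂ) * K ℓ n ℓ
        = ((ρ ℓ : ℝ) : ℂ) * (w ^ ℓ)⁻¹ * (1 / (N:ℂ)) * (if ℓ ≤ n then w ^ n else 0) := by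
    intro ℓ hℓ n hn
    have hexp : Complex.exp (2 * (Real.pi:ℂ) * Complex.I * (ℓ:ℂ) * (p:ℂ) / (N:ℂ)) *
        Complex.exp (2 * (Real.pi:ℂ) * Complex.I *
          ((((n * q : ℕ) : ℤ) - ((ℓ * q : ℕ) : ℤ) - ((n * p : ℕ) : ℤ) : ℤ) : ℂ) / (N:ℂ))
        = w ^ n * (w ^ ℓ)⁻¹ := by
      rw [hwdef, ← Complex.exp_nat_mul, ← Complex.exp_nat_mul, ← Complex.exp_neg,
        ← Complex.exp_add, ← Complex.exp_add]
      congr 1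
      rw [hd]
      push_cast
      field_simp
      ring
    rw [hK]
    simp only []
    rw [show Complex.exp (2 * (Real.pi:ℂ) * Complex.I * (ℓ:ℂ) * (p:ℂ) / (N:ℂ)) *
        ((1 / (N:ℂ)) * (Complex.exp (2 * (Real.pi:ℂ) * Complex.I *
          ((((n * q : ℕ) : ℤ) - ((ℓ * q : ℕ) : ℤ) - ((n * p : ℕ) : ℤ) : ℤ) : ℂ) / (N:ℂ)) *
        (if ℓ ≤ n then 1 else 0)))
        = (Complex.exp (2 * (Real.pi:ℂ) * Complex.I * (ℓ:ℂ) * (p:ℂ) / (N:ℂ)) *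
           Complex.exp (2 * (Real.pi:ℂ) * Complex.I *
          ((((n * q : ℕ) : ℤ) - ((ℓ * q : ℕ) : ℤ) - ((n * p : ℕ) : ℤ) : ℤ) : ℂ) / (N:ℂ))) *
          ((1 / (N:ℂ)) * (if ℓ ≤ n then 1 else 0)) by ring, hexp]
    by_cases hln : ℓ ≤ n <;> simp [hln] <;> ring
  have hgeom : ∀ ℓ ∈ range L, (∑ n ∈ range N, if ℓ ≤ n then w ^ n else 0)
      = (1 - w ^ ℓ) / (w - 1) := by
    intro ℓ hℓ
    have hf : (range N).filter (fun n => ℓ ≤ n) = Ico ℓ N := by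
      ext a; simp [Finset.mem_filter, Finset.mem_range, Finset.mem_Ico, and_comm]
    rw [← Finset.sum_filter, hf, geom_sum_Ico hw1
      (le_trans (le_of_lt (mem_range.mp hℓ)) hLN), hwN]
  calc ∑ ℓ ∈ range L, ∑ n ∈ range N, ((ρ ℓ : ℝ) : ℂ) * K ℓ n ℓ
      = ∑ ℓ ∈ range L, ((ρ ℓ : ℝ) : ℂ) * (w ^ ℓ)⁻¹ * (1 / (N:ℂ)) * ((1 - w ^ ℓ) / (w - 1)) := by
        refine Finset.sum_congr rfl fun ℓ hℓ => ?_
        rw [Finset.sum_congr rfl (hterm ℓ hℓ), ← Finset.mul_sum, hgeom ℓ hℓ]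
    _ = ∑ ℓ ∈ range L, (((ρ ℓ : ℝ) : ℂ) * (w ^ ℓ)⁻¹ * ((1/(N:ℂ)) / (w - 1))
          - ((ρ ℓ : ℝ) : ℂ) * ((1/(N:ℂ)) / (w - 1))) := by
        refine Finset.sum_congr rfl fun ℓ hℓ => ?_
        have hwl : w ^ ℓ ≠ 0 := pow_ne_zero _ hw0
        have hw1' : w - 1 ≠ 0 := sub_ne_zero.mpr hw1
        field_simp
    _ = (rhoBar N L ρ d) * ((1/(N:ℂ)) / (w - 1)) - 1 * ((1/(N:ℂ)) / (w - 1)) := by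
        rw [Finset.sum_sub_distrib, ← Finset.sum_mul, ← Finset.sum_mul]
        congr 1
        · congr 1
          rw [rhoBar]
          refine Finset.sum_congr rfl fun ℓ hℓ => ?_
          congr 1
          rw [hwdef, ← Complex.exp_nat_mul, ← Complex.exp_neg]
          congr 1
          ring
        · congr 1
          rw [show (1:ℂ) = (((∑ ℓ ∈ range L, ρ ℓ : ℝ)):ℂ) by rw [hsum]; norm_num]
          push_cast
          rfl
    _ = (1 - rhoBar N L ρ d) / ((N : ℂ) * (1 - w)) := by
        have hw1' : w - 1 ≠ 0 := sub_ne_zero.mpr hw1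
        have hw1'' : (1:ℂ) - w ≠ 0 := by
          intro hcon; apply hw1; linear_combination -hcon
        field_simp
        ring
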